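/- Let (T,w) be a canonical weighted tree with exactly two centroids c1, c2 and total weight n. Then every proper subtree of the component T1 of T − c1c2 containing c1 (i.e., every connected component of T1 − c1) has weight at most n/2 − 1, and likewise for T2. -/

import Mathlib

open SimpleGraph
open scoped Classical

/-- Weight of the connected component of `u` in `T - v`: total weight of all vertices
reachable from `u` by a walk avoiding `v`. -/
noncomputable def compWeight {V : Type*} [Fintype V] (T : SimpleGraph V) (w : V → ℕ)
    (v u : V) : ℕ :=
  ∑ y : V, if ∃ p : T.Walk u y, v ∉ p.support then w y else 0

/-- The heaviest subtree weight of `v`: maximum weight of a connected component of `T - v`. -/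
noncomputable def hs {V : Type*} [Fintype V] (T : SimpleGraph V) (w : V → ℕ) (v : V) : ℕ :=
  Finset.univ.sup fun u => compWeight T w v u

/-- A centroid is a vertex minimizing the heaviest subtree weight. -/
def IsCentroid {V : Type*} [Fintype V] (T : SimpleGraph V) (w : V → ℕ) (v : V) : Prop :=
  ∀ u, hs T w v ≤ hs T w u
/-- A leaf is a vertex with exactly one neighbor. -/
def IsLeaf {V : Type*} (T : SimpleGraph V) (v : V) : Prop :=
  (T.neighborSet v).ncard = 1

/-- A weighted tree is canonical if the zero-weight vertices form an independent set
and every leaf has positive weight. -/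
def Canonical {V : Type*} (T : SimpleGraph V) (w : V → ℕ) : Prop :=
  (∀ u v, T.Adj u v → ¬(w u = 0 ∧ w v = 0)) ∧ (∀ v, IsLeaf T v → 0 < w v)

section AV
variable {V : Type*} {T : SimpleGraph V} {a b v u u' y z : V}

lemma av_refl (h : u ≠ v) : ∃ p : T.Walk u u, v ∉ p.support :=
  ⟨Walk.nil, by simp [Ne.symm h]⟩

lemma av_symm (h : ∃ p : T.Walk u y, v ∉ p.support) : ∃ p : T.Walk y u, v ∉ p.support := by
  obtain ⟨p, hp⟩ := h
  exact ⟨p.reverse, by simpa [Walk.support_reverse] using hp⟩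

lemma av_trans (h1 : ∃ p : T.Walk u y, v ∉ p.support) (h2 : ∃ p : T.Walk y z, v ∉ p.support) :
    ∃ p : T.Walk u z, v ∉ p.support := by
  obtain ⟨p, hp⟩ := h1; obtain ⟨q, hq⟩ := h2
  exact ⟨p.append q, by rw [Walk.mem_support_append_iff]; tauto⟩

lemma av_path (h : ∃ p : T.Walk u y, v ∉ p.support) :
    ∃ p : T.Walk u y, p.IsPath ∧ v ∉ p.support := by
  classical
  obtain ⟨p, hp⟩ := h
  exact ⟨p.bypass, p.bypass_isPath, fun hm => hp (p.support_bypass_subset hm)⟩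

lemma start_not_mem_dropUntil_support [DecidableEq V] {p : T.Walk a y} (hp : p.IsPath)
    (hb : b ∈ p.support) (hab : a ≠ b) : a ∉ (p.dropUntil b hb).support := by
  intro hmem
  have hnd : p.support.Nodup := hp.support_nodup
  rw [← p.take_spec hb, Walk.support_append, List.nodup_append] at hnd
  have h1 : a ∈ (p.takeUntil b hb).support := Walk.start_mem_support _
  have h2 : a ∈ (p.dropUntil b hb).support.tail := by
    have hcons := (p.dropUntil b hb).support_eq_cons
    rw [hcons] at hmem
    exact (List.mem_cons.mp hmem).resolve_left hab
  exact hnd.2.2 a h1 a h2 rfl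

lemma av_cover (hT : T.Connected) (hab : a ≠ b) (y : V) :
    (∃ p : T.Walk a y, b ∉ p.support) ∨ (∃ p : T.Walk b y, a ∉ p.support) := by
  classical
  obtain ⟨p0⟩ := hT.preconnected a y
  by_cases hb : b ∈ p0.bypass.support
  · exact Or.inr ⟨p0.bypass.dropUntil b hb,
      start_not_mem_dropUntil_support p0.bypass_isPath hb hab⟩
  · exact Or.inl ⟨p0.bypass, hb⟩

lemma av_disjoint (hT : T.IsTree) (hab : T.Adj a b) (y : V) :
    ¬((∃ p : T.Walk a y, b ∉ p.support) ∧ (∃ p : T.Walk b y, a ∉ p.support)) := by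
  rintro ⟨h1, h2⟩
  obtain ⟨p, hp, hbp⟩ := av_path h1
  obtain ⟨q, hq, haq⟩ := av_path h2
  have hcons : (Walk.cons hab q).IsPath := hq.cons haq
  have hEq := hT.IsAcyclic.path_unique ⟨p, hp⟩ ⟨Walk.cons hab q, hcons⟩
  apply hbp
  rw [show p = Walk.cons hab q from congrArg Subtype.val hEq]
  simp [Walk.support_cons]

end AV

section Quant
variable {V : Type*} [Fintype V] {T : SimpleGraph V} {w : V → ℕ} {a b v x u u' : V}

lemma compWeight_le_hs : compWeight T w v u ≤ hs T w v := Finset.le_sup (Finset.mem_univ u)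

lemma compWeight_le_total : compWeight T w v u ≤ ∑ y, w y :=
  Finset.sum_le_sum fun y _ => by split <;> simp

lemma compWeight_self : compWeight T w v v = 0 :=
  Finset.sum_eq_zero fun y _ => by
    rw [if_neg]; rintro ⟨p, hp⟩; exact hp p.start_mem_support

lemma compWeight_congr (h : ∃ p : T.Walk u u', v ∉ p.support) :
    compWeight T w v u = compWeight T w v u' :=
  Finset.sum_congr rfl fun y _ => by
    have hiff : (∃ p : T.Walk u y, v ∉ p.support) ↔ (∃ p : T.Walk u' y, v ∉ p.support) :=
      ⟨fun h2 => av_trans (av_symm h) h2, fun h2 => av_trans h h2⟩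
    simp only [hiff]

lemma sum_split (hT : T.IsTree) (hab : T.Adj a b) :
    compWeight T w b a + compWeight T w a b = ∑ y, w y := by
  unfold compWeight
  rw [← Finset.sum_add_distrib]
  refine Finset.sum_congr rfl fun y _ => ?_
  have hd := av_disjoint hT hab y
  rcases av_cover hT.isConnected hab.ne y with h | h
  · rw [if_pos h, if_neg (fun h' => hd ⟨h, h'⟩)]
    simp
  · rw [if_neg (fun h' => hd ⟨h', h⟩), if_pos h]
    simp

lemma sum_cover (hT : T.IsTree) (hab : a ≠ b) :
    ∑ y, w y ≤ compWeight T w b a + compWeight T w a b := by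
  unfold compWeight
  rw [← Finset.sum_add_distrib]
  refine Finset.sum_le_sum fun y _ => ?_
  rcases av_cover hT.isConnected hab y with h | h
  · rw [if_pos h]; exact Nat.le_add_right _ _
  · rw [if_pos h]; exact le_add_self

lemma hs_move (hT : T.IsTree) (hvx : T.Adj v x) :
    hs T w x ≤ max ((∑ y, w y) - compWeight T w v x) (compWeight T w v x - w x) := by
  refine Finset.sup_le fun u _ => ?_
  by_cases hux : u = x
  · subst hux; rw [compWeight_self]; exact Nat.zero_le _
  by_cases huv : ∃ p : T.Walk v u, x ∉ p.support
  · have h1 : compWeight T w x u = compWeight T w x v := compWeight_congr (av_symm huv)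
    have h2 : compWeight T w x v + compWeight T w v x = ∑ y, w y := sum_split hT hvx
    refine le_trans ?_ (le_max_left _ _)
    omega
  · have hxvu : ∃ p : T.Walk x u, v ∉ p.support := by
      rcases av_cover hT.isConnected hvx.ne u with h | h
      · exact absurd h huv
      · exact h
    have key : compWeight T w x u + w x ≤ compWeight T w v x := by
      unfold compWeight
      have hx : w x = ∑ y, if y = x then w y else 0 := by simp
      rw [hx, ← Finset.sum_add_distrib]
      refine Finset.sum_le_sum fun y _ => ?_
      by_cases hyx : y = x
      · subst hyx
        rw [if_neg (fun h => by obtain ⟨p, hp⟩ := h; exact hp p.end_mem_support),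
          if_pos rfl, if_pos (av_refl hvx.ne')]
        simp
      · by_cases hy : ∃ p : T.Walk u y, x ∉ p.support
        · have hAvy : ∃ p : T.Walk u y, v ∉ p.support := by
            obtain ⟨p, hp, hxp⟩ := av_path hy
            by_cases hvp : v ∈ p.support
            · exact absurd (av_symm ⟨p.takeUntil v hvp,
                fun hmem => hxp (Walk.support_takeUntil_subset _ hvp hmem)⟩) huv
            · exact ⟨p, hvp⟩
          rw [if_pos hy, if_neg hyx, if_pos (av_trans hxvu hAvy)]
          simp
        · rw [if_neg hy, if_neg hyx]
          simp
    refine le_trans ?_ (le_max_right _ _)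
    omega

end Quant

lemma one_side {V : Type*} [Fintype V] (T : SimpleGraph V) (w : V → ℕ) (hT : T.IsTree)
    (c1 c2 : V) (h12 : c1 ≠ c2) (hcent : {v : V | IsCentroid T w v} = {c1, c2}) :
    ∀ u, u ≠ c1 → (T.deleteEdges {s(c1, c2)}).Reachable c1 u →
      compWeight T w c1 u ≤ (∑ v, w v) / 2 - 1 := by
  have hc1 : IsCentroid T w c1 := by
    have : c1 ∈ {v : V | IsCentroid T w v} := by rw [hcent]; simp
    exact this
  have hc2 : IsCentroid T w c2 := by
    have : c2 ∈ {v : V | IsCentroid T w v} := by rw [hcent]; simp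
    exact this
  have honly : ∀ x, IsCentroid T w x → x = c1 ∨ x = c2 := fun x hx => by
    have : x ∈ ({c1, c2} : Set V) := by rw [← hcent]; exact hx
    simpa using this
  have hm : hs T w c2 = hs T w c1 := le_antisymm (hc2 c1) (hc1 c2)
  set n := ∑ v, w v with hn
  set m := hs T w c1 with hmdef
  -- adjacency of the two centroids
  have hadj : T.Adj c1 c2 := by
    obtain ⟨p0⟩ := hT.isConnected.preconnected c1 c2
    obtain ⟨p, hp, -⟩ : ∃ p : T.Walk c1 c2, p.IsPath ∧ True :=
      ⟨p0.bypass, p0.bypass_isPath, trivial⟩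
    cases p with
    | nil => exact absurd rfl h12
    | @cons _ x _ h q =>
      rw [Walk.cons_isPath_iff] at hp
      have h1 : compWeight T w c1 x = compWeight T w c1 c2 := compWeight_congr ⟨q, hp.2⟩
      have h2 : n ≤ compWeight T w c2 c1 + compWeight T w c1 c2 := sum_cover hT h12
      have h3 : compWeight T w c2 c1 ≤ m := hm ▸ compWeight_le_hs
      have h4 : compWeight T w c1 x ≤ m := compWeight_le_hs
      have h5 := hs_move (w := w) hT h
      have h6 : hs T w x ≤ m := by
        refine h5.trans (max_le ?_ ?_) <;> omega
      have hcx : IsCentroid T w x := fun u => h6.trans (hc1 u)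
      rcases honly x hcx with rfl | rfl
      · exact absurd rfl h.ne
      · exact h
  intro u hu hreach
  have hWe : ∀ (z1 z2 : V) (W : (T.deleteEdges {s(c1, c2)}).Walk z1 z2),
      ∀ e ∈ W.edges, e ∈ T.edgeSet := by
    intro z1 z2 W e he
    have := W.edges_subset_edgeSet he
    rw [edgeSet_deleteEdges] at this
    exact this.1
  have hnoreach : ¬ (T.deleteEdges {s(c1, c2)}).Reachable c1 c2 := by
    rintro ⟨W⟩
    have hedge : s(c1, c2) ∉ (W.transfer T (hWe _ _ W)).edges := by
      rw [Walk.edges_transfer]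
      intro hmem
      have := W.edges_subset_edgeSet hmem
      rw [edgeSet_deleteEdges] at this
      exact this.2 rfl
    have hPe : s(c1, c2) ∉ (W.transfer T (hWe _ _ W)).bypass.edges :=
      fun hmem => hedge (Walk.edges_bypass_subset _ hmem)
    have hQ : (Walk.cons hadj Walk.nil).IsPath := by
      rw [Walk.cons_isPath_iff]
      constructor
      · exact Walk.IsPath.nil
      · simpa using h12
    have hEq := hT.IsAcyclic.path_unique
      ⟨(W.transfer T (hWe _ _ W)).bypass, Walk.bypass_isPath _⟩ ⟨Walk.cons hadj Walk.nil, hQ⟩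
    apply hPe
    rw [show (W.transfer T (hWe _ _ W)).bypass = Walk.cons hadj Walk.nil from
      congrArg Subtype.val hEq]
    simp
  have hAc2 : ∃ p : T.Walk c1 u, c2 ∉ p.support := by
    obtain ⟨W⟩ := hreach
    by_cases hc2W : c2 ∈ W.support
    · exact absurd ⟨W.takeUntil c2 hc2W⟩ hnoreach
    · exact ⟨W.transfer T (hWe _ _ W), by rwa [Walk.support_transfer]⟩
  by_contra hcon
  push_neg at hcon
  set s := compWeight T w c1 u with hsdef
  obtain ⟨p, hp, hc2p⟩ := av_path hAc2
  cases p with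
  | nil => exact hu rfl
  | @cons _ x _ h q =>
    rw [Walk.cons_isPath_iff] at hp
    have hxc2 : x ≠ c2 := by
      rintro rfl
      exact hc2p (by simp [Walk.support_cons])
    have h1 : compWeight T w c1 x = s := compWeight_congr ⟨q, hp.2⟩
    have ha : compWeight T w c1 c2 ≤ m := compWeight_le_hs
    have hb : compWeight T w c2 c1 ≤ m := hm ▸ compWeight_le_hs
    have hab : compWeight T w c2 c1 + compWeight T w c1 c2 = n := sum_split hT hadj
    have h4 : s ≤ m := h1 ▸ compWeight_le_hs
    have h5 := hs_move (w := w) hT h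
    have h6 : hs T w x ≤ m := by
      refine h5.trans (max_le ?_ ?_) <;> omega
    have hcx : IsCentroid T w x := fun u' => h6.trans (hc1 u')
    rcases honly x hcx with rfl | rfl
    · exact h.ne rfl
    · exact hxc2 rfl


/-- In a canonical weighted tree with exactly two centroids c1, c2 and total weight n,
every connected component of T1 - c1 (where T1 is the component of c1 in T minus the
edge c1c2) has weight at most n/2 - 1, and likewise on the other side. -/
theorem stmt_7 {V : Type*} [Fintype V] (T : SimpleGraph V) (w : V → ℕ) (hT : T.IsTree)
    (hc : Canonical T w) (c1 c2 : V) (h12 : c1 ≠ c2)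
    (hcent : {v : V | IsCentroid T w v} = {c1, c2}) :
    (∀ u, u ≠ c1 → (T.deleteEdges {s(c1, c2)}).Reachable c1 u →
      compWeight T w c1 u ≤ (∑ v, w v) / 2 - 1) ∧
    (∀ u, u ≠ c2 → (T.deleteEdges {s(c1, c2)}).Reachable c2 u →
      compWeight T w c2 u ≤ (∑ v, w v) / 2 - 1) := by
  constructor
  · exact one_side T w hT c1 c2 h12 hcent
  · have hcent' : {v : V | IsCentroid T w v} = {c2, c1} := by
      rw [hcent]; exact Set.pair_comm c1 c2
    have hswap : ({s(c2, c1)} : Set (Sym2 V)) = {s(c1, c2)} := by rw [Sym2.eq_swap]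
    intro u hu hr
    exact one_side T w hT c2 c1 h12.symm hcent' u hu (by rw [hswap]; exact hr)
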